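/- The word norm on a finitely generated free abelian group with respect to a finite generating set has uniformly bounded distance from its homogenisation: there is a constant C such that |N(x) − ‖x‖| ≤ C for all x. -/

import Mathlib

open Filter

/-- The word norm on an abelian group associated with a finite generating set `S`:
the minimal `∑ |a_s|` over all representations `x = ∑ a_s • s` with `a_s ∈ ℤ`. -/
noncomputable def wordNorm {V : Type*} [AddCommGroup V] (S : Finset V) (x : V) : ℕ :=
  sInf {n : ℕ | ∃ a : S → ℤ, x = ∑ s : S, a s • (s : V) ∧ ∑ s : S, (a s).natAbs = n}

section Aux

variable {V : Type*} [AddCommGroup V] (S : Finset V)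

lemma wordNorm_le_rep {x : V} (a : S → ℤ) (hx : x = ∑ s : S, a s • (s : V)) :
    wordNorm S x ≤ ∑ s : S, (a s).natAbs :=
  Nat.sInf_le ⟨a, hx, rfl⟩

lemma exists_wordNorm_rep (hgen : ∀ x : V, ∃ a : S → ℤ, x = ∑ s : S, a s • (s : V)) (x : V) :
    ∃ a : S → ℤ, x = ∑ s : S, a s • (s : V) ∧ ∑ s : S, (a s).natAbs = wordNorm S x := by
  have h : {n : ℕ | ∃ a : S → ℤ,
      x = ∑ s : S, a s • (s : V) ∧ ∑ s : S, (a s).natAbs = n}.Nonempty := by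
    obtain ⟨a, ha⟩ := hgen x
    exact ⟨_, a, ha, rfl⟩
  obtain ⟨a, ha, hsum⟩ := Nat.sInf_mem h
  exact ⟨a, ha, hsum⟩

lemma wordNorm_nsmul_le (hgen : ∀ x : V, ∃ a : S → ℤ, x = ∑ s : S, a s • (s : V))
    (k : ℕ) (x : V) : wordNorm S (k • x) ≤ k * wordNorm S x := by
  obtain ⟨a, ha, hs⟩ := exists_wordNorm_rep S hgen x
  have hrep : k • x = ∑ s : S, ((k : ℤ) * a s) • (s : V) := by
    rw [ha, Finset.smul_sum]
    exact Finset.sum_congr rfl fun s _ => by rw [mul_smul, natCast_zsmul]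
  calc wordNorm S (k • x) ≤ ∑ s : S, ((k : ℤ) * a s).natAbs := wordNorm_le_rep S _ hrep
    _ = k * wordNorm S x := by
        rw [← hs, Finset.mul_sum]
        exact Finset.sum_congr rfl fun s _ => by
          rw [Int.natAbs_mul, Int.natAbs_natCast]

lemma wordNorm_doubling (hgen : ∀ x : V, ∃ a : S → ℤ, x = ∑ s : S, a s • (s : V)) (K : ℕ)
    (hK : ∀ (r : S → ℤ) (y : V), (∀ s, r s = 0 ∨ r s = 1 ∨ r s = -1) →
      (2 : ℤ) • y = ∑ s : S, r s • (s : V) → wordNorm S y ≤ K)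
    (x : V) : 2 * wordNorm S x ≤ wordNorm S (2 • x) + (S.card + 2 * K) := by
  obtain ⟨a, ha, hs⟩ := exists_wordNorm_rep S hgen (2 • x)
  set b : S → ℤ := fun s => a s / 2 with hb
  set r : S → ℤ := fun s => a s % 2 with hr
  set y : V := x - ∑ s : S, b s • (s : V) with hy
  have h2x : (2 : ℤ) • x = ∑ s : S, a s • (s : V) := by
    rw [← ha, show ((2 : ℤ)) = ((2 : ℕ) : ℤ) by norm_num, natCast_zsmul]
  have hy2 : (2 : ℤ) • y = ∑ s : S, r s • (s : V) := by
    rw [hy, smul_sub, h2x, Finset.smul_sum, ← Finset.sum_sub_distrib]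
    refine Finset.sum_congr rfl fun s _ => ?_
    rw [smul_smul, ← sub_smul]
    congr 1
    simp only [hb, hr]
    omega
  have hrval : ∀ s, r s = 0 ∨ r s = 1 ∨ r s = -1 := fun s => by
    simp only [hr]; omega
  have hyK : wordNorm S y ≤ K := hK r y hrval hy2
  obtain ⟨c, hc, hcs⟩ := exists_wordNorm_rep S hgen y
  have hxrep : x = ∑ s : S, (c s + b s) • (s : V) := by
    have : x = y + ∑ s : S, b s • (s : V) := by rw [hy]; abel
    rw [this, hc, ← Finset.sum_add_distrib]
    exact Finset.sum_congr rfl fun s _ => (add_smul _ _ _).symm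
  have hNx : wordNorm S x ≤ ∑ s : S, (c s + b s).natAbs := wordNorm_le_rep S _ hxrep
  have hsplit : ∑ s : S, (c s + b s).natAbs ≤ wordNorm S y + ∑ s : S, (b s).natAbs := by
    rw [← hcs, ← Finset.sum_add_distrib]
    exact Finset.sum_le_sum fun s _ => Int.natAbs_add_le _ _
  have hbsum : 2 * ∑ s : S, (b s).natAbs ≤ wordNorm S (2 • x) + S.card := by
    rw [← hs, Finset.mul_sum]
    calc ∑ s : S, 2 * (b s).natAbs ≤ ∑ s : S, ((a s).natAbs + 1) :=
          Finset.sum_le_sum fun s _ => by simp only [hb]; omega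
      _ = (∑ s : S, (a s).natAbs) + S.card := by
          rw [Finset.sum_add_distrib, Finset.sum_const, smul_eq_mul, mul_one,
            Finset.card_univ, Fintype.card_coe]
  omega

lemma exists_K {V : Type*} [AddCommGroup V] [Module.Free ℤ V] (S : Finset V) :
    ∃ K : ℕ, ∀ (r : S → ℤ) (y : V), (∀ s, r s = 0 ∨ r s = 1 ∨ r s = -1) →
      (2 : ℤ) • y = ∑ s : S, r s • (s : V) → wordNorm S y ≤ K := by
  classical
  set g : (S → ℤ) → ℕ := fun r =>
    wordNorm S (if h : ∃ y : V, (2 : ℤ) • y = ∑ s : S, r s • (s : V) then h.choose else 0)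
    with hg
  refine ⟨(Fintype.piFinset (fun _ : S => ({0, 1, -1} : Finset ℤ))).sup g, ?_⟩
  intro r y hr hy
  have hmem : r ∈ Fintype.piFinset (fun _ : S => ({0, 1, -1} : Finset ℤ)) := by
    simp only [Fintype.mem_piFinset, Finset.mem_insert, Finset.mem_singleton]
    exact hr
  have hex : ∃ y : V, (2 : ℤ) • y = ∑ s : S, r s • (s : V) := ⟨y, hy⟩
  have hchoose : hex.choose = y := by
    have h2 : (2 : ℤ) • hex.choose = (2 : ℤ) • y := by rw [hex.choose_spec, hy]
    exact smul_right_injective V two_ne_zero h2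
  have : g r = wordNorm S y := by rw [hg]; simp only [dif_pos hex, hchoose]
  rw [← this]
  exact Finset.le_sup hmem

lemma wordNorm_pow_lower (hgen : ∀ x : V, ∃ a : S → ℤ, x = ∑ s : S, a s • (s : V)) (D : ℕ)
    (hD : ∀ x : V, 2 * wordNorm S x ≤ wordNorm S (2 • x) + D) (x : V) :
    ∀ k : ℕ, 2 ^ k * wordNorm S x ≤ wordNorm S (2 ^ k • x) + (2 ^ k - 1) * D := by
  intro k
  induction k with
  | zero => simp
  | succ k ih =>
    have h1 : 2 ^ (k + 1) * wordNorm S x ≤ 2 * wordNorm S (2 ^ k • x) + 2 * ((2 ^ k - 1) * D) := by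
      calc 2 ^ (k + 1) * wordNorm S x = 2 * (2 ^ k * wordNorm S x) := by ring
        _ ≤ 2 * (wordNorm S (2 ^ k • x) + (2 ^ k - 1) * D) := Nat.mul_le_mul_left 2 ih
        _ = 2 * wordNorm S (2 ^ k • x) + 2 * ((2 ^ k - 1) * D) := by ring
    have h2 : 2 * wordNorm S (2 ^ k • x) ≤ wordNorm S (2 ^ (k + 1) • x) + D := by
      have := hD (2 ^ k • x)
      rwa [smul_smul, ← pow_succ'] at this
    have hpk : 1 ≤ 2 ^ k := Nat.one_le_two_pow
    have harith : D + 2 * ((2 ^ k - 1) * D) = (2 ^ (k + 1) - 1) * D := by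
      have h2k : 2 ^ (k + 1) = 2 * 2 ^ k := by ring
      obtain ⟨m, hm⟩ := Nat.exists_eq_add_of_le hpk
      have h1m : 1 + m - 1 = m := by omega
      have hm' : 2 * (1 + m) - 1 = 1 + 2 * m := by omega
      rw [h2k, hm, h1m, hm']
      ring
    omega

end Aux

/-- The word norm on a finitely generated free abelian group with respect to a finite
generating set has uniformly bounded distance from its homogenisation
`ν x = lim_k N(k·x)/k`. -/
theorem wordNorm_bounded_distance_from_homogenisation {V : Type*} [AddCommGroup V]
    [Module.Free ℤ V] (S : Finset V)
    (hgen : ∀ x : V, ∃ a : S → ℤ, x = ∑ s : S, a s • (s : V))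
    (ν : V → ℝ)
    (hν : ∀ x : V, Tendsto (fun k : ℕ => (wordNorm S (k • x) : ℝ) / k) atTop (nhds (ν x))) :
    ∃ C : ℝ, ∀ x : V, |(wordNorm S x : ℝ) - ν x| ≤ C := by
  obtain ⟨K, hK⟩ := exists_K S
  set D : ℕ := S.card + 2 * K with hD
  have hdbl : ∀ x : V, 2 * wordNorm S x ≤ wordNorm S (2 • x) + D :=
    fun x => wordNorm_doubling S hgen K hK x
  refine ⟨(D : ℝ), fun x => ?_⟩
  -- the subsequence along powers of two
  have hpow : Tendsto (fun k : ℕ => ((2 : ℕ) ^ k : ℕ)) atTop atTop :=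
    tendsto_pow_atTop_atTop_of_one_lt one_lt_two
  have hsub : Tendsto (fun k : ℕ => (wordNorm S (2 ^ k • x) : ℝ) / (2 ^ k : ℕ)) atTop
      (nhds (ν x)) := (hν x).comp hpow
  have hposR : ∀ k : ℕ, (0 : ℝ) < ((2 : ℕ) ^ k : ℕ) := by
    intro k; positivity
  -- upper bound: the subsequence is ≤ N x
  have hub : ∀ k : ℕ, (wordNorm S (2 ^ k • x) : ℝ) / ((2 : ℕ) ^ k : ℕ) ≤ wordNorm S x := by
    intro k
    rw [div_le_iff₀ (hposR k)]
    have := wordNorm_nsmul_le S hgen (2 ^ k) x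
    calc (wordNorm S (2 ^ k • x) : ℝ) ≤ ((2 ^ k * wordNorm S x : ℕ) : ℝ) := by exact_mod_cast this
      _ = (wordNorm S x : ℝ) * ((2 : ℕ) ^ k : ℕ) := by push_cast; ring
  have hν_le : ν x ≤ wordNorm S x :=
    le_of_tendsto hsub (Filter.Eventually.of_forall hub)
  -- lower bound: N x ≤ subsequence + D
  have hlb : ∀ k : ℕ, (wordNorm S x : ℝ) ≤
      (wordNorm S (2 ^ k • x) : ℝ) / ((2 : ℕ) ^ k : ℕ) + D := by
    intro k
    have h := wordNorm_pow_lower S hgen D hdbl x k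
    have h' : 2 ^ k * wordNorm S x ≤ wordNorm S (2 ^ k • x) + 2 ^ k * D := by
      have : (2 ^ k - 1) * D ≤ 2 ^ k * D := Nat.mul_le_mul_right D (Nat.sub_le _ _)
      omega
    have hcast : ((2 : ℝ) ^ k) * (wordNorm S x : ℝ) ≤
        (wordNorm S (2 ^ k • x) : ℝ) + (2 : ℝ) ^ k * D := by exact_mod_cast h'
    have h2k : (((2 : ℕ) ^ k : ℕ) : ℝ) = (2 : ℝ) ^ k := by push_cast; ring
    have hp : (0 : ℝ) < (2 : ℝ) ^ k := by positivity
    rw [h2k, ← sub_le_iff_le_add, le_div_iff₀ hp]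
    nlinarith [hcast]
  have hx_le : (wordNorm S x : ℝ) ≤ ν x + D := by
    have : Tendsto (fun k : ℕ => (wordNorm S (2 ^ k • x) : ℝ) / ((2 : ℕ) ^ k : ℕ) + D) atTop
        (nhds (ν x + D)) := hsub.add tendsto_const_nhds
    exact le_of_tendsto_of_tendsto tendsto_const_nhds this
      (Filter.Eventually.of_forall hlb)
  rw [abs_le]
  constructor
  · have : (0 : ℝ) ≤ D := by positivity
    linarith
  · linarith
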